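/- Let s, t ≥ 0 with s ≠ t and define z(x) = [Γ(x+t)/Γ(x+s)]^{1/(t-s)} − x. Then lim_{x→∞} z'(x) = 0; equivalently, lim_{x→∞} [Γ(x+t)/Γ(x+s)]^{1/(t-s)}·(ψ(x+t) − ψ(x+s))/(t−s) = 1. -/

import Mathlib

noncomputable def psi (x : ℝ) : ℝ := deriv (fun y => Real.log (Real.Gamma y)) x

noncomputable def z (s t x : ℝ) : ℝ :=
  (Real.Gamma (x + t) / Real.Gamma (x + s)) ^ ((1 : ℝ) / (t - s)) - x

open Real Filter Set Finset

namespace ZAux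

noncomputable def L (x : ℝ) : ℝ := Real.log (Real.Gamma x)

lemma psi_eq (x : ℝ) : psi x = deriv L x := rfl

lemma diffL {x : ℝ} (hx : 0 < x) : DifferentiableAt ℝ L x := by
  have h1 : DifferentiableAt ℝ Real.Gamma x :=
    Real.differentiableAt_Gamma (fun m =>
      ne_of_gt (by have : (0:ℝ) ≤ m := Nat.cast_nonneg m; linarith))
  exact h1.log (Real.Gamma_pos_of_pos hx).ne'

lemma hasDerivAt_L {x : ℝ} (hx : 0 < x) : HasDerivAt L (psi x) x :=
  (diffL hx).hasDerivAt

lemma convexL : ConvexOn ℝ (Set.Ioi 0) L := Real.convexOn_log_Gamma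

lemma L_rec {x : ℝ} (hx : 0 < x) : L (x + 1) = L x + Real.log x := by
  unfold L
  rw [Real.Gamma_add_one hx.ne', Real.log_mul hx.ne' (Real.Gamma_pos_of_pos hx).ne']
  ring

lemma psi_rec {x : ℝ} (hx : 0 < x) : psi (x + 1) = psi x + 1 / x := by
  have h1 : HasDerivAt (fun y => L (y + 1)) (psi (x + 1)) x := by
    simpa [Function.comp_def] using (hasDerivAt_L (by linarith : (0:ℝ) < x + 1)).comp x
      ((hasDerivAt_id x).add_const 1)
  have h2 : HasDerivAt (fun y => L y + Real.log y) (psi x + 1 / x) x := by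
    have := (hasDerivAt_L hx).add (Real.hasDerivAt_log hx.ne'); rw [one_div]; exact this
  have h3 : (fun y => L (y + 1)) =ᶠ[nhds x] fun y => L y + Real.log y := by
    filter_upwards [isOpen_Ioi.mem_nhds (Set.mem_Ioi.2 hx)] with y hy
    exact L_rec hy
  exact h1.unique (h2.congr_of_eventuallyEq h3)

lemma slope_L {a b : ℝ} : slope L a b = (L b - L a) / (b - a) := by
  rw [slope_def_field]

lemma psi_le_log {x : ℝ} (hx : 0 < x) : psi x ≤ Real.log x := by
  have h := convexL.deriv_le_slope (Set.mem_Ioi.2 hx)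
    (Set.mem_Ioi.2 (by linarith : (0:ℝ) < x + 1)) (by linarith) (diffL hx)
  rw [slope_L, L_rec hx] at h
  simpa [psi_eq] using h

lemma log_le_psi {x : ℝ} (hx : 0 < x) : Real.log x - 1 / x ≤ psi x := by
  have h := convexL.slope_le_deriv (Set.mem_Ioi.2 hx)
    (Set.mem_Ioi.2 (by linarith : (0:ℝ) < x + 1)) (by linarith) (diffL (by linarith))
  rw [slope_L, L_rec hx] at h
  have h2 : Real.log x ≤ psi (x + 1) := by simpa [psi_eq] using h
  rw [psi_rec hx] at h2
  linarith

/-- Error in the 2-term Taylor expansion of `log (1 + 1/y)`. -/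
lemma log_taylor {y : ℝ} (hy : 2 ≤ y) :
    |Real.log (1 + 1 / y) - (1 / y - 1 / (2 * y ^ 2))| ≤ 2 / y ^ 3 := by
  have hy0 : (0:ℝ) < y := by linarith
  have habs : |(-(1/y) : ℝ)| < 1 := by
    rw [abs_neg, abs_of_pos (by positivity)]
    rw [div_lt_one hy0]; linarith
  have h := Real.abs_log_sub_add_sum_range_le habs 2
  have hs : (∑ i ∈ Finset.range 2, (-(1/y)) ^ (i + 1) / (i + 1)) = -(1/y) + (1/y)^2/2 := by
    simp [Finset.sum_range_succ]
    ring
  rw [hs] at h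
  have h1 : (1 : ℝ) - -(1/y) = 1 + 1/y := by ring
  rw [h1] at h
  have habs2 : |(-(1/y) : ℝ)| = 1/y := by rw [abs_neg, abs_of_pos (by positivity)]
  rw [habs2] at h
  have h12 : (1:ℝ)/2 ≤ 1 - 1/y := by
    have : 1/y ≤ 1/2 := by rw [div_le_div_iff₀ hy0 (by norm_num)]; linarith
    linarith
  have hb : (1/y)^(2+1) / (1 - 1/y) ≤ 2 / y^3 := by
    have e1 : ((1:ℝ)/y)^(2+1) = 1/y^3 := by norm_num
    rw [e1]
    calc 1/y^3 / (1 - 1/y) ≤ 1/y^3 / (1/2) := by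
          gcongr
      _ = 2/y^3 := by ring
  have : |(-(1/y) + (1/y)^2/2) + Real.log (1 + 1/y)| =
      |Real.log (1 + 1/y) - (1/y - 1/(2*y^2))| := by
    congr 1
    field_simp
    ring
  rw [this] at h
  exact h.trans hb

noncomputable def phi (x : ℝ) : ℝ := psi x - Real.log x + 1 / (2 * x)

lemma psi_eq_phi {x : ℝ} : psi x = Real.log x - 1 / (2 * x) + phi x := by
  unfold phi; ring

lemma phi_crude {x : ℝ} (hx : 0 < x) : |phi x| ≤ 1 / (2 * x) := by
  unfold phi
  have h1 := psi_le_log hx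
  have h2 := log_le_psi hx
  rw [abs_le]
  constructor
  · have hxx : 1/x = 2*(1/(2*x)) := by field_simp
    linarith
  · linarith

lemma phi_inc {x : ℝ} (hx : 2 ≤ x) : |phi (x + 1) - phi x| ≤ 3 / x ^ 3 := by
  have hx0 : (0:ℝ) < x := by linarith
  have hlog : Real.log (x + 1) - Real.log x = Real.log (1 + 1/x) := by
    rw [← Real.log_div (by linarith) hx0.ne']
    congr 1
    field_simp
  have key : phi (x + 1) - phi x
      = (1 / (2 * x^2 * (x+1))) - (Real.log (1 + 1/x) - (1/x - 1/(2*x^2))) := by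
    have hlog' : Real.log (x+1) = Real.log x + Real.log (1+1/x) := by linarith [hlog]
    have hrat : 1/(2*(x+1)) - 1/(2*x) = 1/(2*x^2*(x+1)) - 1/(2*x^2) := by
      field_simp
      ring
    unfold phi
    rw [psi_rec hx0, hlog']
    linarith [hrat]
  rw [key]
  have h3 := log_taylor hx
  have h4 : |(1 / (2 * x^2 * (x+1))) - (Real.log (1 + 1/x) - (1/x - 1/(2*x^2)))|
      ≤ 1 / (2 * x^2 * (x+1)) + 2 / x^3 := by
    refine (abs_sub _ _).trans ?_
    gcongr
    rw [abs_of_pos (by positivity)]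
  refine h4.trans ?_
  have h5 : 1 / (2 * x^2 * (x+1)) ≤ 1 / x^3 := by
    rw [div_le_div_iff₀ (by positivity) (by positivity)]
    nlinarith [sq_nonneg x]
  have h6 : (1:ℝ)/x^3 + 2/x^3 = 3/x^3 := by ring
  linarith

lemma sum_cube {x : ℝ} (hx : 2 ≤ x) (n : ℕ) :
    ∑ k ∈ Finset.range n, 3 / (x + k) ^ 3 ≤ 2 / (x - 1) ^ 2 := by
  have key : ∀ n : ℕ, ∑ k ∈ Finset.range n, 3 / (x + k) ^ 3
      ≤ (3/2) * (1 / (x-1)^2 - 1 / (x + n - 1)^2) := by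
    intro n
    induction n with
    | zero => simp
    | succ n ih =>
      rw [Finset.sum_range_succ]
      have hy : (2:ℝ) ≤ x + n := by
        have : (0:ℝ) ≤ n := Nat.cast_nonneg n
        linarith
      have hstep : 3 / (x + n)^3 ≤ (3/2) * (1 / (x + n - 1)^2 - 1 / (x + n)^2) := by
        set y : ℝ := x + n with hy'
        have hy0 : (0:ℝ) < y := by linarith
        have hym : (0:ℝ) < y - 1 := by linarith
        have e : (3/2 : ℝ) * (1 / (y-1)^2 - 1/y^2)
            = (3 * (2*y - 1)) / (2 * ((y-1)^2 * y^2)) := by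
          field_simp
          ring
        rw [e, div_le_div_iff₀ (by positivity) (by positivity)]
        nlinarith [sq_nonneg y, sq_nonneg (y-1), pow_pos hy0 3]
      have hcast : ((n+1 : ℕ) : ℝ) = (n : ℝ) + 1 := by push_cast; ring
      rw [hcast]
      have : x + ((n:ℝ)+1) - 1 = x + n := by ring
      rw [this]
      linarith
  refine (key n).trans ?_
  have hxm : (0:ℝ) < x - 1 := by linarith
  have h1 : (0:ℝ) < (x - 1)^2 := by positivity
  have h2 : (0:ℝ) ≤ 1 / (x + n - 1)^2 := by positivity
  have h3 : (3/2 : ℝ) * (1/(x-1)^2) ≤ 2 / (x-1)^2 := by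
    rw [mul_one_div]
    gcongr <;> norm_num
  nlinarith [h3]

lemma phi_telescope (x : ℝ) (n : ℕ) :
    phi (x + n) = phi x + ∑ k ∈ Finset.range n, (phi (x + k + 1) - phi (x + k)) := by
  induction n with
  | zero => simp
  | succ n ih =>
    rw [Finset.sum_range_succ, ← add_assoc, ← ih]
    push_cast
    rw [show x + ((n:ℝ) + 1) = x + n + 1 by ring]
    ring

lemma phi_bound {x : ℝ} (hx : 2 ≤ x) : |phi x| ≤ 2 / (x - 1) ^ 2 := by
  have hx0 : (0:ℝ) < x := by linarith
  have key : ∀ n : ℕ, |phi x| ≤ 1 / (2 * (x + n)) + 2 / (x - 1) ^ 2 := by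
    intro n
    have hn0 : (0:ℝ) ≤ n := Nat.cast_nonneg n
    have h1 := phi_telescope x n
    have h2 : |phi (x + n)| ≤ 1 / (2 * (x + n)) := phi_crude (by linarith)
    have h3 : |∑ k ∈ Finset.range n, (phi (x + k + 1) - phi (x + k))| ≤ 2 / (x - 1) ^ 2 := by
      refine (Finset.abs_sum_le_sum_abs _ _).trans ?_
      refine (Finset.sum_le_sum fun k _ => ?_).trans (sum_cube hx n)
      exact phi_inc (by have : (0:ℝ) ≤ k := Nat.cast_nonneg k; linarith)
    have h4 : phi x = phi (x + n) - ∑ k ∈ Finset.range n, (phi (x + k + 1) - phi (x + k)) := by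
      linarith
    rw [h4]
    exact (abs_sub _ _).trans (by linarith)
  have hlim : Filter.Tendsto (fun n : ℕ => 1 / (2 * (x + n)) + 2 / (x - 1) ^ 2)
      Filter.atTop (nhds (0 + 2 / (x - 1) ^ 2)) := by
    refine Filter.Tendsto.add ?_ tendsto_const_nhds
    have h5 : Filter.Tendsto (fun n : ℕ => 2 * (x + (n:ℝ))) Filter.atTop Filter.atTop := by
      refine Filter.Tendsto.const_mul_atTop two_pos ?_
      exact tendsto_atTop_add_const_left _ x tendsto_natCast_atTop_atTop
    simpa [one_div, Function.comp_def] using tendsto_inv_atTop_zero.comp h5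
  have := ge_of_tendsto hlim (Filter.Eventually.of_forall key)
  simpa using this

lemma tendsto_const_div (c : ℝ) :
    Filter.Tendsto (fun x : ℝ => c / x) Filter.atTop (nhds 0) := by
  simpa [div_eq_mul_inv] using tendsto_inv_atTop_zero.const_mul c

lemma tendsto_add_div (s : ℝ) :
    Filter.Tendsto (fun x : ℝ => (x + s) / x) Filter.atTop (nhds 1) := by
  have h : Filter.Tendsto (fun x : ℝ => 1 + s / x) Filter.atTop (nhds 1) := by
    simpa using tendsto_const_nhds.add (tendsto_const_div s)
  refine h.congr' ?_
  filter_upwards [Filter.eventually_ne_atTop (0:ℝ)] with x hx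
  field_simp

lemma tendsto_one_div_add (s : ℝ) :
    Filter.Tendsto (fun x : ℝ => 1 / (x + s)) Filter.atTop (nhds 0) := by
  have h : Filter.Tendsto (fun x : ℝ => x + s) Filter.atTop Filter.atTop :=
    tendsto_atTop_add_const_right _ s tendsto_id
  simpa [one_div, Function.comp_def] using tendsto_inv_atTop_zero.comp h

lemma tendsto_x_log_diff (s t : ℝ) (hs : 0 ≤ s) (ht : 0 ≤ t) :
    Filter.Tendsto (fun x : ℝ => x * (Real.log (x + t) - Real.log (x + s)))
      Filter.atTop (nhds (t - s)) := by
  have h := (Real.tendsto_mul_log_one_add_div_atTop t).sub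
    (Real.tendsto_mul_log_one_add_div_atTop s)
  refine h.congr' ?_
  filter_upwards [Filter.eventually_gt_atTop (0:ℝ)] with x hx
  have hlog : ∀ a : ℝ, 0 ≤ a → Real.log (x + a) = Real.log x + Real.log (1 + a / x) := by
    intro a ha
    rw [← Real.log_mul hx.ne' (by positivity)]
    congr 1
    field_simp
  rw [hlog t ht, hlog s hs]
  ring

lemma tendsto_x_half_diff (s t : ℝ) (hs : 0 ≤ s) (ht : 0 ≤ t) :
    Filter.Tendsto (fun x : ℝ => x * (1 / (2 * (x + s)) - 1 / (2 * (x + t))))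
      Filter.atTop (nhds 0) := by
  apply squeeze_zero_norm' (a := fun x : ℝ => |t - s| * (1 / x))
  · filter_upwards [Filter.eventually_gt_atTop (0:ℝ)] with x hx
    have hxs : (0:ℝ) < x + s := by linarith
    have hxt : (0:ℝ) < x + t := by linarith
    have he : x * (1 / (2 * (x + s)) - 1 / (2 * (x + t)))
        = (t - s) * (x / (2 * (x + s) * (x + t))) := by
      field_simp
      ring
    rw [Real.norm_eq_abs, he, abs_mul,
      abs_of_nonneg (div_nonneg hx.le (by nlinarith : (0:ℝ) ≤ 2 * (x + s) * (x + t)))]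
    have hfrac : x / (2 * (x + s) * (x + t)) ≤ 1 / x := by
      rw [div_le_div_iff₀ (by nlinarith : (0:ℝ) < 2 * (x + s) * (x + t)) hx]
      nlinarith
    exact mul_le_mul_of_nonneg_left hfrac (abs_nonneg _)
  · simpa using (tendsto_const_div 1).const_mul |t - s|

lemma tendsto_x_phi_diff (s t : ℝ) (hs : 0 ≤ s) (ht : 0 ≤ t) :
    Filter.Tendsto (fun x : ℝ => x * (phi (x + t) - phi (x + s)))
      Filter.atTop (nhds 0) := by
  apply squeeze_zero_norm' (a := fun x : ℝ => 16 / x)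
  · filter_upwards [Filter.eventually_ge_atTop (3:ℝ)] with x hx
    have hx0 : (0:ℝ) < x := by linarith
    have hbt : |phi (x + t)| ≤ 2 / (x + t - 1) ^ 2 := phi_bound (by linarith)
    have hbs : |phi (x + s)| ≤ 2 / (x + s - 1) ^ 2 := phi_bound (by linarith)
    have h8 : ∀ a : ℝ, 0 ≤ a → 2 / (x + a - 1) ^ 2 ≤ 8 / x ^ 2 := by
      intro a ha
      rw [div_le_div_iff₀ (pow_pos (show (0:ℝ) < x + a - 1 by linarith) 2) (by positivity)]
      nlinarith [mul_nonneg ha ha, mul_nonneg ha (show (0:ℝ) ≤ x - 1 by linarith)]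
    rw [Real.norm_eq_abs, abs_mul, abs_of_pos hx0]
    calc x * |phi (x + t) - phi (x + s)| ≤ x * (8 / x ^ 2 + 8 / x ^ 2) := by
          gcongr
          exact (abs_sub _ _).trans (by linarith [h8 t ht, h8 s hs])
      _ = 16 / x := by field_simp; ring
  · exact tendsto_const_div 16

lemma tendsto_x_psi_diff (s t : ℝ) (hs : 0 ≤ s) (ht : 0 ≤ t) :
    Filter.Tendsto (fun x : ℝ => x * (psi (x + t) - psi (x + s)))
      Filter.atTop (nhds (t - s)) := by
  have h := ((tendsto_x_log_diff s t hs ht).add (tendsto_x_half_diff s t hs ht)).add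
    (tendsto_x_phi_diff s t hs ht)
  rw [add_zero, add_zero] at h
  refine h.congr' ?_
  filter_upwards [Filter.eventually_gt_atTop (0:ℝ)] with x hx
  have e1 : psi (x + t) = Real.log (x + t) - 1 / (2 * (x + t)) + phi (x + t) := psi_eq_phi
  have e2 : psi (x + s) = Real.log (x + s) - 1 / (2 * (x + s)) + phi (x + s) := psi_eq_phi
  rw [e1, e2]
  ring


lemma slope_ineq {s t x : ℝ} (hs : 0 ≤ s) (ht : 0 ≤ t) (hlt : s < t) (hx : 0 < x) :
    psi (x + s) ≤ (L (x + t) - L (x + s)) / (t - s) ∧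
    (L (x + t) - L (x + s)) / (t - s) ≤ psi (x + t) := by
  have hxs : (0:ℝ) < x + s := by linarith
  have hxt : (0:ℝ) < x + t := by linarith
  have hmem_s : x + s ∈ Set.Ioi (0:ℝ) := hxs
  have hmem_t : x + t ∈ Set.Ioi (0:ℝ) := hxt
  have hlt' : x + s < x + t := by linarith
  have e : slope L (x + s) (x + t) = (L (x + t) - L (x + s)) / (t - s) := by
    rw [slope_L, show x + t - (x + s) = t - s by ring]
  constructor
  · have h := convexL.deriv_le_slope hmem_s hmem_t hlt' (diffL hxs)
    rw [e] at h
    exact h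
  · have h := convexL.slope_le_deriv hmem_s hmem_t hlt' (diffL hxt)
    rw [e] at h
    exact h

lemma ratio_eq_exp {s t x : ℝ} (hs : 0 ≤ s) (ht : 0 ≤ t) (hx : 0 < x) (u : ℝ) :
    (Real.Gamma (x + t) / Real.Gamma (x + s)) ^ (u : ℝ)
      = Real.exp ((L (x + t) - L (x + s)) * u) := by
  have hGt : (0:ℝ) < Real.Gamma (x + t) := Real.Gamma_pos_of_pos (by linarith)
  have hGs : (0:ℝ) < Real.Gamma (x + s) := Real.Gamma_pos_of_pos (by linarith)
  rw [Real.rpow_def_of_pos (div_pos hGt hGs), Real.log_div hGt.ne' hGs.ne']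
  rfl

lemma tendsto_ratio (s t : ℝ) (hs : 0 ≤ s) (ht : 0 ≤ t) (hlt : s < t) :
    Filter.Tendsto
      (fun x : ℝ => (Real.Gamma (x + t) / Real.Gamma (x + s)) ^ ((1:ℝ)/(t - s)) / x)
      Filter.atTop (nhds 1) := by
  have hlow : Filter.Tendsto (fun x : ℝ => ((x + s) / Real.exp (1 / (x + s))) / x)
      Filter.atTop (nhds 1) := by
    have h1 : Filter.Tendsto (fun x : ℝ => Real.exp (1 / (x + s))) Filter.atTop (nhds 1) := by
      have := (Real.continuous_exp.tendsto 0).comp (tendsto_one_div_add s)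
      simpa [Function.comp_def] using this
    have h2 : Filter.Tendsto (fun x : ℝ => ((x + s) / x) / Real.exp (1 / (x + s)))
        Filter.atTop (nhds 1) := by
      have := (tendsto_add_div s).div h1 one_ne_zero
      simpa [Pi.div_def] using this
    refine h2.congr' ?_
    filter_upwards [Filter.eventually_gt_atTop (0:ℝ)] with x hx
    rw [div_div, div_div, mul_comm x]
  have hup : Filter.Tendsto (fun x : ℝ => (x + t) / x) Filter.atTop (nhds 1) :=
    tendsto_add_div t
  refine tendsto_of_tendsto_of_tendsto_of_le_of_le' hlow hup ?_ ?_
  · filter_upwards [Filter.eventually_gt_atTop (0:ℝ)] with x hx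
    have hxs : (0:ℝ) < x + s := by linarith
    have hsl := (slope_ineq hs ht hlt hx).1
    have hfx : (Real.Gamma (x + t) / Real.Gamma (x + s)) ^ ((1:ℝ)/(t - s))
        = Real.exp ((L (x + t) - L (x + s)) * (1/(t - s))) := ratio_eq_exp hs ht hx _
    have hexp : (x + s) / Real.exp (1 / (x + s))
        ≤ Real.exp ((L (x + t) - L (x + s)) * (1/(t - s))) := by
      have h3 : Real.log (x + s) - 1 / (x + s) ≤ (L (x + t) - L (x + s)) * (1/(t - s)) := by
        rw [mul_one_div]
        exact (log_le_psi hxs).trans hsl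
      calc (x + s) / Real.exp (1 / (x + s))
          = Real.exp (Real.log (x + s) - 1 / (x + s)) := by
            rw [Real.exp_sub, Real.exp_log hxs]
        _ ≤ _ := Real.exp_le_exp.2 h3
    rw [hfx]
    gcongr
  · filter_upwards [Filter.eventually_gt_atTop (0:ℝ)] with x hx
    have hxt : (0:ℝ) < x + t := by linarith
    have hsl := (slope_ineq hs ht hlt hx).2
    have hfx : (Real.Gamma (x + t) / Real.Gamma (x + s)) ^ ((1:ℝ)/(t - s))
        = Real.exp ((L (x + t) - L (x + s)) * (1/(t - s))) := ratio_eq_exp hs ht hx _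
    rw [hfx]
    gcongr
    calc Real.exp ((L (x + t) - L (x + s)) * (1/(t - s)))
        ≤ Real.exp (Real.log (x + t)) := by
          refine Real.exp_le_exp.2 ?_
          rw [mul_one_div]
          exact hsl.trans (psi_le_log hxt)
      _ = x + t := Real.exp_log hxt

lemma tendsto_F_lt (s t : ℝ) (hs : 0 ≤ s) (ht : 0 ≤ t) (hlt : s < t) :
    Filter.Tendsto
      (fun x : ℝ => (Real.Gamma (x + t) / Real.Gamma (x + s)) ^ ((1:ℝ)/(t - s)) *
        (psi (x + t) - psi (x + s)) / (t - s))
      Filter.atTop (nhds 1) := by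
  have hu : t - s ≠ 0 := sub_ne_zero.2 hlt.ne'
  have h2 : Filter.Tendsto (fun x : ℝ => x * (psi (x + t) - psi (x + s)) / (t - s))
      Filter.atTop (nhds 1) := by
    have := (tendsto_x_psi_diff s t hs ht).div_const (t - s)
    rwa [div_self hu] at this
  have h := (tendsto_ratio s t hs ht hlt).mul h2
  rw [mul_one] at h
  refine h.congr' ?_
  filter_upwards [Filter.eventually_gt_atTop (0:ℝ)] with x hx
  field_simp

lemma F_symm (s t : ℝ) (hs : 0 ≤ s) (ht : 0 ≤ t) {x : ℝ} (hx : 0 < x) :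
    (Real.Gamma (x + t) / Real.Gamma (x + s)) ^ ((1:ℝ)/(t - s)) *
        (psi (x + t) - psi (x + s)) / (t - s)
      = (Real.Gamma (x + s) / Real.Gamma (x + t)) ^ ((1:ℝ)/(s - t)) *
        (psi (x + s) - psi (x + t)) / (s - t) := by
  rw [ratio_eq_exp hs ht hx, ratio_eq_exp ht hs hx]
  have e : (L (x + t) - L (x + s)) * (1/(t - s)) = (L (x + s) - L (x + t)) * (1/(s - t)) := by
    rcases eq_or_ne (t - s) 0 with h | h
    · rw [show s - t = -(t - s) by ring, h]
      simp
    · have h' : s - t ≠ 0 := by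
        intro hc
        apply h
        linarith
      field_simp
      ring
  rw [e]
  rcases eq_or_ne (s - t) 0 with h | h
  · rw [show t - s = -(s - t) by ring, h]
    simp
  · have h' : t - s ≠ 0 := by intro hc; apply h; linarith
    field_simp
    ring

lemma tendsto_F (s t : ℝ) (hs : 0 ≤ s) (ht : 0 ≤ t) (hst : s ≠ t) :
    Filter.Tendsto
      (fun x : ℝ => (Real.Gamma (x + t) / Real.Gamma (x + s)) ^ ((1:ℝ)/(t - s)) *
        (psi (x + t) - psi (x + s)) / (t - s))
      Filter.atTop (nhds 1) := by
  rcases lt_or_gt_of_ne hst with h | h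
  · exact tendsto_F_lt s t hs ht h
  · refine (tendsto_F_lt t s ht hs h).congr' ?_
    filter_upwards [Filter.eventually_gt_atTop (0:ℝ)] with x hx
    exact (F_symm s t hs ht hx).symm

lemma z_hasDeriv (s t : ℝ) (hs : 0 ≤ s) (ht : 0 ≤ t) (hst : s ≠ t) {x : ℝ} (hx : 0 < x) :
    HasDerivAt (z s t)
      ((Real.Gamma (x + t) / Real.Gamma (x + s)) ^ ((1:ℝ)/(t - s)) *
        (psi (x + t) - psi (x + s)) / (t - s) - 1) x := by
  have hxt : (0:ℝ) < x + t := by linarith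
  have hxs : (0:ℝ) < x + s := by linarith
  have hLt : HasDerivAt (fun y => L (y + t)) (psi (x + t)) x := by
    simpa [Function.comp_def] using (hasDerivAt_L hxt).comp x ((hasDerivAt_id x).add_const t)
  have hLs : HasDerivAt (fun y => L (y + s)) (psi (x + s)) x := by
    simpa [Function.comp_def] using (hasDerivAt_L hxs).comp x ((hasDerivAt_id x).add_const s)
  have hg : HasDerivAt
      (fun y => Real.exp ((L (y + t) - L (y + s)) * (1/(t - s))) - y)
      (Real.exp ((L (x + t) - L (x + s)) * (1/(t - s))) *
        ((psi (x + t) - psi (x + s)) * (1/(t - s))) - 1) x :=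
    (((hLt.sub hLs).mul_const (1/(t - s))).exp).sub (hasDerivAt_id' x)
  have hzg : (z s t) =ᶠ[nhds x]
      fun y => Real.exp ((L (y + t) - L (y + s)) * (1/(t - s))) - y := by
    filter_upwards [isOpen_Ioi.mem_nhds (Set.mem_Ioi.2 hx)] with y hy
    unfold z
    rw [ratio_eq_exp hs ht hy]
  have hres := hg.congr_of_eventuallyEq hzg
  have hval : (Real.Gamma (x + t) / Real.Gamma (x + s)) ^ ((1:ℝ)/(t - s)) *
        (psi (x + t) - psi (x + s)) / (t - s) - 1
      = Real.exp ((L (x + t) - L (x + s)) * (1/(t - s))) *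
        ((psi (x + t) - psi (x + s)) * (1/(t - s))) - 1 := by
    rw [ratio_eq_exp hs ht hx]
    ring
  rw [hval]
  exact hres

end ZAux

theorem z_deriv_tendsto_zero (s t : ℝ) (hs : 0 ≤ s) (ht : 0 ≤ t) (hst : s ≠ t) :
    Filter.Tendsto (fun x => deriv (z s t) x) Filter.atTop (nhds 0) ∧
    Filter.Tendsto
      (fun x => (Real.Gamma (x + t) / Real.Gamma (x + s)) ^ ((1 : ℝ) / (t - s)) *
        (psi (x + t) - psi (x + s)) / (t - s))
      Filter.atTop (nhds 1) := by
  have hF := ZAux.tendsto_F s t hs ht hst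
  refine ⟨?_, hF⟩
  have h0 := hF.sub_const 1
  rw [sub_self] at h0
  refine h0.congr' ?_
  filter_upwards [Filter.eventually_gt_atTop (0:ℝ)] with x hx
  exact ((ZAux.z_hasDeriv s t hs ht hst hx).deriv).symm
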